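/- arXiv:0902.2446 — 6 statements merged into one kernel-verified Lean document; each statement's English description precedes it below -/
import Mathlib

section
/- Fix l > 0 and parameters C1 > 0, C2 > 0, m1, m2 ∈ ℝ. If μ1 = F(0,0), μ2 = F(0,l), μ3 = F(−(√3/2)l, −l/2), μ4 = F((√3/2)l, −l/2), then μ2·μ3·μ4 < μ1³ and the parameters are recovered by: C2 = 3l² / log(μ1³/(μ2·μ3·μ4)), m1 = (C2/(2·l·√3))·log(μ4/μ3), m2 = (C2/(6l))·log(μ2²/(μ3·μ4)), and C1 = μ1·exp((m1² + m2²)/C2). -/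
open Real

/-- The Gaussian field `F(x1,x2) = C1 * exp(-((x1-m1)^2+(x2-m2)^2)/C2)`. -/
noncomputable def gaussF (C1 C2 m1 m2 x1 x2 : ℝ) : ℝ :=
  C1 * Real.exp (-((x1 - m1) ^ 2 + (x2 - m2) ^ 2) / C2)

/-- From the four exact measurements at a node of a hexagonal tessellation and its three
neighbors, the parameters of the Gaussian are recovered by the formulas of
Proposition 1. -/
theorem hexagon_parameter_recovery
    (l C1 C2 m1 m2 μ1 μ2 μ3 μ4 : ℝ)
    (hl : 0 < l) (hC1 : 0 < C1) (hC2 : 0 < C2)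
    (h1 : μ1 = gaussF C1 C2 m1 m2 0 0)
    (h2 : μ2 = gaussF C1 C2 m1 m2 0 l)
    (h3 : μ3 = gaussF C1 C2 m1 m2 (-(Real.sqrt 3 / 2) * l) (-(l / 2)))
    (h4 : μ4 = gaussF C1 C2 m1 m2 ((Real.sqrt 3 / 2) * l) (-(l / 2))) :
    μ2 * μ3 * μ4 < μ1 ^ 3 ∧
    C2 = 3 * l ^ 2 / Real.log (μ1 ^ 3 / (μ2 * μ3 * μ4)) ∧
    m1 = C2 / (2 * l * Real.sqrt 3) * Real.log (μ4 / μ3) ∧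
    m2 = C2 / (6 * l) * Real.log (μ2 ^ 2 / (μ3 * μ4)) ∧
    C1 = μ1 * Real.exp ((m1 ^ 2 + m2 ^ 2) / C2) := by
  have hs : Real.sqrt 3 ^ 2 = 3 := Real.sq_sqrt (by norm_num)
  have hs0 : (0:ℝ) < Real.sqrt 3 := Real.sqrt_pos.mpr (by norm_num)
  have hμ1 : 0 < μ1 := by rw [h1]; unfold gaussF; positivity
  have hμ2 : 0 < μ2 := by rw [h2]; unfold gaussF; positivity
  have hμ3 : 0 < μ3 := by rw [h3]; unfold gaussF; positivity
  have hμ4 : 0 < μ4 := by rw [h4]; unfold gaussF; positivity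
  have L1 : Real.log μ1 = Real.log C1 + -(((0:ℝ) - m1) ^ 2 + ((0:ℝ) - m2) ^ 2) / C2 := by
    rw [h1]; unfold gaussF
    rw [Real.log_mul hC1.ne' (Real.exp_ne_zero _), Real.log_exp]
  have L2 : Real.log μ2 = Real.log C1 + -(((0:ℝ) - m1) ^ 2 + (l - m2) ^ 2) / C2 := by
    rw [h2]; unfold gaussF
    rw [Real.log_mul hC1.ne' (Real.exp_ne_zero _), Real.log_exp]
  have L3 : Real.log μ3 = Real.log C1 +
      -((-(Real.sqrt 3 / 2) * l - m1) ^ 2 + (-(l / 2) - m2) ^ 2) / C2 := by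
    rw [h3]; unfold gaussF
    rw [Real.log_mul hC1.ne' (Real.exp_ne_zero _), Real.log_exp]
  have L4 : Real.log μ4 = Real.log C1 +
      -((Real.sqrt 3 / 2 * l - m1) ^ 2 + (-(l / 2) - m2) ^ 2) / C2 := by
    rw [h4]; unfold gaussF
    rw [Real.log_mul hC1.ne' (Real.exp_ne_zero _), Real.log_exp]
  have key1 : Real.log (μ1 ^ 3 / (μ2 * μ3 * μ4)) = 3 * l ^ 2 / C2 := by
    rw [Real.log_div (by positivity) (by positivity),
      Real.log_mul (by positivity) hμ4.ne', Real.log_mul hμ2.ne' hμ3.ne',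
      Real.log_pow, L1, L2, L3, L4]
    push_cast
    field_simp
    linear_combination (2 * l ^ 2) * hs
  have key2 : Real.log (μ4 / μ3) = 2 * Real.sqrt 3 * l * m1 / C2 := by
    rw [Real.log_div hμ4.ne' hμ3.ne', L3, L4]
    field_simp
    ring
  have key3 : Real.log (μ2 ^ 2 / (μ3 * μ4)) = 6 * l * m2 / C2 := by
    rw [Real.log_div (by positivity) (by positivity),
      Real.log_mul hμ3.ne' hμ4.ne', Real.log_pow, L2, L3, L4]
    push_cast
    field_simp
    linear_combination (2 * l ^ 2) * hs
  have hlt : μ2 * μ3 * μ4 < μ1 ^ 3 := by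
    have h1lt : 1 < μ1 ^ 3 / (μ2 * μ3 * μ4) := by
      rw [← Real.exp_log (x := μ1 ^ 3 / (μ2 * μ3 * μ4)) (by positivity), key1]
      calc (1:ℝ) = Real.exp 0 := Real.exp_zero.symm
        _ < _ := Real.exp_lt_exp.mpr (by positivity)
    have := (one_lt_div (by positivity : (0:ℝ) < μ2 * μ3 * μ4)).mp h1lt
    linarith
  refine ⟨hlt, ?_, ?_, ?_, ?_⟩
  · rw [key1]; field_simp
  · rw [key2]; field_simp
  · rw [key3]; field_simp
  · rw [h1]; unfold gaussF
    rw [mul_assoc, ← Real.exp_add,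
      show -(((0:ℝ) - m1) ^ 2 + ((0:ℝ) - m2) ^ 2) / C2 + (m1 ^ 2 + m2 ^ 2) / C2 = 0 by ring,
      Real.exp_zero, mul_one]
end

section
/- Fix l > 0. The measurement map Φ : ℝ>0 × ℝ>0 × ℝ × ℝ → (ℝ>0)⁴ defined by Φ(C1, C2, m1, m2) = (F(0,0), F(0,l), F(−(√3/2)l, −l/2), F((√3/2)l, −l/2)) is injective: if Φ(C1, C2, m1, m2) = Φ(C1', C2', m1', m2') then (C1, C2, m1, m2) = (C1', C2', m1', m2'). -/
open Real

/-- The measurement map `Φ` at the four points of a hexagonal cell of edge `l`. -/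
noncomputable def measMap (l C1 C2 m1 m2 : ℝ) : ℝ × ℝ × ℝ × ℝ :=
  (gaussF C1 C2 m1 m2 0 0,
   gaussF C1 C2 m1 m2 0 l,
   gaussF C1 C2 m1 m2 (-(Real.sqrt 3 / 2) * l) (-(l / 2)),
   gaussF C1 C2 m1 m2 ((Real.sqrt 3 / 2) * l) (-(l / 2)))

/-- The measurement map `Φ` is injective on `ℝ>0 × ℝ>0 × ℝ × ℝ`. -/
theorem measMap_injective
    (l : ℝ) (hl : 0 < l)
    (C1 C2 m1 m2 C1' C2' m1' m2' : ℝ)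
    (hC1 : 0 < C1) (hC2 : 0 < C2) (hC1' : 0 < C1') (hC2' : 0 < C2')
    (heq : measMap l C1 C2 m1 m2 = measMap l C1' C2' m1' m2') :
    C1 = C1' ∧ C2 = C2' ∧ m1 = m1' ∧ m2 = m2' := by
  have hs : Real.sqrt 3 ^ 2 = 3 := Real.sq_sqrt (by norm_num)
  simp only [measMap, gaussF, Prod.mk.injEq] at heq
  obtain ⟨e0, e1, e2, e3⟩ := heq
  have lg : ∀ x1 x2 : ℝ,
      C1 * Real.exp (-((x1 - m1) ^ 2 + (x2 - m2) ^ 2) / C2) =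
        C1' * Real.exp (-((x1 - m1') ^ 2 + (x2 - m2') ^ 2) / C2') →
      (Real.log C1 - Real.log C1') * (C2 * C2') =
        ((x1 - m1) ^ 2 + (x2 - m2) ^ 2) * C2' -
          ((x1 - m1') ^ 2 + (x2 - m2') ^ 2) * C2 := by
    intro x1 x2 h
    have h' := congrArg Real.log h
    rw [Real.log_mul hC1.ne' (Real.exp_ne_zero _), Real.log_exp,
        Real.log_mul hC1'.ne' (Real.exp_ne_zero _), Real.log_exp] at h'
    field_simp at h'
    linear_combination h'
  have M0 := lg _ _ e0
  have M1 := lg _ _ e1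
  have M2 := lg _ _ e2
  have M3 := lg _ _ e3
  have key : 3 * l ^ 2 * C2' = 3 * l ^ 2 * C2 := by
    linear_combination 3 * M0 - M1 - M2 - M3 + (l ^ 2 / 2 * C2 - l ^ 2 / 2 * C2') * hs
  have hc2 : C2 = C2' := by
    have h3 : (3 : ℝ) * l ^ 2 ≠ 0 := by positivity
    exact (mul_left_cancel₀ h3 key).symm
  subst hc2
  have hm1 : m1 = m1' := by
    have h : 2 * Real.sqrt 3 * l * C2 ≠ 0 := by positivity
    exact mul_left_cancel₀ h (by linear_combination M3 - M2 :
      2 * Real.sqrt 3 * l * C2 * m1 = 2 * Real.sqrt 3 * l * C2 * m1')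
  have hm2 : m2 = m2' := by
    have h : 2 * l * C2 ≠ 0 := by positivity
    exact mul_left_cancel₀ h (by linear_combination M1 - M0 :
      2 * l * C2 * m2 = 2 * l * C2 * m2')
  subst hm1; subst hm2
  exact ⟨mul_right_cancel₀ (Real.exp_ne_zero _) e0, rfl, rfl, rfl⟩
end

section
/- Fix l > 0. For every (μ1, μ2, μ3, μ4) ∈ (ℝ>0)⁴ satisfying μ2·μ3·μ4 < μ1³, there exist (unique) parameters C1 > 0, C2 > 0, m1, m2 ∈ ℝ with Φ(C1, C2, m1, m2) = (μ1, μ2, μ3, μ4); they are given by C2 = 3l²/log(μ1³/(μ2·μ3·μ4)), m1 = (C2/(2·l·√3))·log(μ4/μ3), m2 = (C2/(6l))·log(μ2²/(μ3·μ4)), C1 = μ1·exp((m1² + m2²)/C2). Hence Φ is a bijection from ℝ>0 × ℝ>0 × ℝ × ℝ onto {(μ1,μ2,μ3,μ4) ∈ (ℝ>0)⁴ : μ2·μ3·μ4 < μ1³}. -/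
open Real

/-- For every positive measurement vector with `μ2·μ3·μ4 < μ1³` there exist unique
parameters realizing it, given by the explicit inversion formulas; hence `Φ` is a
bijection onto `{μ ∈ (ℝ>0)⁴ : μ2·μ3·μ4 < μ1³}`. -/
theorem measMap_surjective_unique
    (l μ1 μ2 μ3 μ4 : ℝ) (hl : 0 < l)
    (hμ1 : 0 < μ1) (hμ2 : 0 < μ2) (hμ3 : 0 < μ3) (hμ4 : 0 < μ4)
    (hlt : μ2 * μ3 * μ4 < μ1 ^ 3) :
    ∀ C2 m1 m2 C1 : ℝ,
      C2 = 3 * l ^ 2 / Real.log (μ1 ^ 3 / (μ2 * μ3 * μ4)) →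
      m1 = C2 / (2 * l * Real.sqrt 3) * Real.log (μ4 / μ3) →
      m2 = C2 / (6 * l) * Real.log (μ2 ^ 2 / (μ3 * μ4)) →
      C1 = μ1 * Real.exp ((m1 ^ 2 + m2 ^ 2) / C2) →
      (0 < C1 ∧ 0 < C2 ∧ measMap l C1 C2 m1 m2 = (μ1, μ2, μ3, μ4)) ∧
      (∀ C1' C2' m1' m2' : ℝ, 0 < C1' → 0 < C2' →
        measMap l C1' C2' m1' m2' = (μ1, μ2, μ3, μ4) →
        C1' = C1 ∧ C2' = C2 ∧ m1' = m1 ∧ m2' = m2) := by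
  intro C2 m1 m2 C1 hC2def hm1def hm2def hC1def
  have hs3 : Real.sqrt 3 ^ 2 = 3 := Real.sq_sqrt (by norm_num)
  have hs3pos : (0:ℝ) < Real.sqrt 3 := Real.sqrt_pos.mpr (by norm_num)
  set a := Real.log μ1 with ha
  set b := Real.log μ2 with hb
  set c := Real.log μ3 with hc
  set d := Real.log μ4 with hd
  have hL : Real.log (μ1 ^ 3 / (μ2 * μ3 * μ4)) = 3 * a - b - c - d := by
    rw [Real.log_div (by positivity) (by positivity), Real.log_pow,
      Real.log_mul (by positivity) (by positivity),
      Real.log_mul (by positivity) (by positivity)]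
    push_cast; ring
  have hLpos : 0 < 3 * a - b - c - d := by
    rw [← hL]
    apply Real.log_pos
    rw [lt_div_iff₀ (by positivity)]
    linarith
  have hC2pos : 0 < C2 := by rw [hC2def, hL]; positivity
  have hC2 : C2 * (3 * a - b - c - d) = 3 * l ^ 2 := by
    rw [hC2def, hL, div_mul_cancel₀ _ (ne_of_gt hLpos)]
  have hm1 : 2 * l * Real.sqrt 3 * m1 = C2 * (d - c) := by
    have hne : (2 * l * Real.sqrt 3) ≠ 0 := by positivity
    rw [hm1def, Real.log_div (by positivity) (by positivity), ← mul_assoc,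
      mul_comm (2 * l * Real.sqrt 3) (C2 / (2 * l * Real.sqrt 3)), div_mul_cancel₀ _ hne]
  have hm2 : 6 * l * m2 = C2 * (2 * b - c - d) := by
    have hne : (6 * l) ≠ 0 := by positivity
    rw [hm2def, Real.log_div (by positivity) (by positivity), Real.log_pow,
      Real.log_mul (by positivity) (by positivity), ← mul_assoc,
      mul_comm (6 * l) (C2 / (6 * l)), div_mul_cancel₀ _ hne]
    push_cast
    ring
  have hC1pos : 0 < C1 := by rw [hC1def]; positivity
  have hlogC1 : Real.log C1 = a + (m1 ^ 2 + m2 ^ 2) / C2 := by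
    rw [hC1def, Real.log_mul (by positivity) (Real.exp_ne_zero _), Real.log_exp]
  -- characterization of measMap equality
  have gauss_eq : ∀ C1' C2' m1' m2' x y μ : ℝ, 0 < C1' → 0 < C2' → 0 < μ →
      (gaussF C1' C2' m1' m2' x y = μ ↔
        Real.log C1' - ((x - m1') ^ 2 + (y - m2') ^ 2) / C2' = Real.log μ) := by
    intro C1' C2' m1' m2' x y μ h1 h2 hμ
    unfold gaussF
    constructor
    · intro h
      rw [← h, Real.log_mul (ne_of_gt h1) (Real.exp_ne_zero _), Real.log_exp]
      ring
    · intro h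
      calc C1' * Real.exp (-((x - m1') ^ 2 + (y - m2') ^ 2) / C2')
          = Real.exp (Real.log C1' + -((x - m1') ^ 2 + (y - m2') ^ 2) / C2') := by
            rw [Real.exp_add, Real.exp_log h1]
        _ = Real.exp (Real.log C1' - ((x - m1') ^ 2 + (y - m2') ^ 2) / C2') := by
            ring_nf
        _ = μ := by rw [h, Real.exp_log hμ]
  have key : ∀ C1' C2' m1' m2' : ℝ, 0 < C1' → 0 < C2' →
      (measMap l C1' C2' m1' m2' = (μ1, μ2, μ3, μ4) ↔
        (Real.log C1' - ((0 - m1') ^ 2 + (0 - m2') ^ 2) / C2' = a ∧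
         Real.log C1' - ((0 - m1') ^ 2 + (l - m2') ^ 2) / C2' = b ∧
         Real.log C1' - ((-(Real.sqrt 3 / 2) * l - m1') ^ 2 + (-(l / 2) - m2') ^ 2) / C2' = c ∧
         Real.log C1' - ((Real.sqrt 3 / 2 * l - m1') ^ 2 + (-(l / 2) - m2') ^ 2) / C2' = d)) := by
    intro C1' C2' m1' m2' h1 h2
    unfold measMap
    rw [Prod.mk.injEq, Prod.mk.injEq, Prod.mk.injEq,
      gauss_eq _ _ _ _ _ _ _ h1 h2 hμ1, gauss_eq _ _ _ _ _ _ _ h1 h2 hμ2,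
      gauss_eq _ _ _ _ _ _ _ h1 h2 hμ3, gauss_eq _ _ _ _ _ _ _ h1 h2 hμ4]
  have step : ∀ A v : ℝ, m1 ^ 2 + m2 ^ 2 - A = C2 * (v - a) →
      Real.log C1 - A / C2 = v := by
    intro A v h
    have hA : A = m1 ^ 2 + m2 ^ 2 - C2 * (v - a) := by linarith
    rw [hlogC1, hA]
    field_simp
    ring
  constructor
  · refine ⟨hC1pos, hC2pos, ?_⟩
    rw [key C1 C2 m1 m2 hC1pos hC2pos]
    refine ⟨step _ _ (by ring), step _ _ (by linear_combination (1/3) * hm2 + (1/3) * hC2),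
      step _ _ ?_, step _ _ ?_⟩
    · linear_combination (-1/2) * hm1 - (1/6) * hm2 + (1/3) * hC2 - (l ^ 2 / 4) * hs3
    · linear_combination (1/2) * hm1 - (1/6) * hm2 + (1/3) * hC2 - (l ^ 2 / 4) * hs3
  · intro C1' C2' m1' m2' h1 h2 hmeas
    rw [key C1' C2' m1' m2' h1 h2] at hmeas
    obtain ⟨q1, q2, q3, q4⟩ := hmeas
    have mk : ∀ A v : ℝ, Real.log C1' - A / C2' = v →
        C2' * Real.log C1' - A = C2' * v := by
      intro A v h
      rw [← h]
      field_simp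
    replace q1 := mk _ _ q1
    replace q2 := mk _ _ q2
    replace q3 := mk _ _ q3
    replace q4 := mk _ _ q4
    have hC2' : C2' * (3 * a - b - c - d) = 3 * l ^ 2 := by
      linear_combination q2 + q3 + q4 - 3 * q1 + (l ^ 2 / 2) * hs3
    have hC2eq : C2' = C2 := by
      have := hC2'.trans hC2.symm
      exact mul_right_cancel₀ (ne_of_gt hLpos) this
    have hm1' : 2 * l * Real.sqrt 3 * m1' = C2' * (d - c) := by
      linear_combination q4 - q3
    have hm1eq : m1' = m1 := by
      have h := hm1'.trans (by rw [hC2eq] : C2' * (d - c) = C2 * (d - c))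
      have := h.trans hm1.symm
      have hne : (2 * l * Real.sqrt 3) ≠ 0 := by positivity
      exact mul_left_cancel₀ hne this
    have hm2' : 6 * l * m2' = C2' * (2 * b - c - d) := by
      linear_combination 2 * q2 - q3 - q4 - (l ^ 2 / 2) * hs3
    have hm2eq : m2' = m2 := by
      have h := hm2'.trans (by rw [hC2eq] : C2' * (2 * b - c - d) = C2 * (2 * b - c - d))
      have := h.trans hm2.symm
      have hne : (6 * l) ≠ 0 := by positivity
      exact mul_left_cancel₀ hne this
    have hlogC1' : Real.log C1' = Real.log C1 := by
      rw [hlogC1]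
      have : C2' * Real.log C1' - ((0 - m1') ^ 2 + (0 - m2') ^ 2) = C2' * a := q1
      rw [hC2eq, hm1eq, hm2eq] at this
      field_simp
      linarith [this]
    have hC1eq : C1' = C1 := by
      rw [← Real.exp_log h1, hlogC1', Real.exp_log hC1pos]
    exact ⟨hC1eq, hC2eq, hm1eq, hm2eq⟩
end

section
/- Let G be a finite graph on vertex set {1,…,N}, 𝒩ᵢ the set of neighbors of i together with i itself, and let s(0) ∈ (ℝ>0)ᴺ evolve by sᵢ(t+1) = Σ_{j ∈ 𝒩ᵢ} ( (1/sⱼ(t)²)/(Σ_{k ∈ 𝒩ᵢ} 1/sₖ(t)²) )·sⱼ(t). Define Pᵢⱼ(t) = (1/sⱼ(t)) / ( Σ_{k ∈ 𝒩ᵢ} 1/sₖ(t) ) for j ∈ 𝒩ᵢ and Pᵢⱼ(t) = 0 otherwise. Then for every t ∈ ℕ, every i, and every j ∈ 𝒩ᵢ, Pᵢⱼ(t) ≥ (minₖ sₖ(0)) / ( |𝒩ᵢ| · maxₖ sₖ(0) ) > 0; in particular the nonzero entries of all matrices P(t) lie in a compact subset of (0,∞). -/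
open Finset

/-- The nonzero entries of the state-dependent matrices `P(t)` of the fusion
algorithm are uniformly bounded below by
`(min s(0)) / (|𝒩ᵢ| · max s(0)) > 0`; in particular they lie in a compact
subset of `(0,∞)`. -/
theorem fusion_matrix_entries_bounded_below
    (N : ℕ) (hN : 0 < N) (G : SimpleGraph (Fin N)) [DecidableRel G.Adj]
    (s : ℕ → Fin N → ℝ) (hs0 : ∀ i, 0 < s 0 i)
    (hrec : ∀ t i, s (t + 1) i =
      ∑ j ∈ insert i (G.neighborFinset i),
        (((s t j) ^ 2)⁻¹ / ∑ k ∈ insert i (G.neighborFinset i), ((s t k) ^ 2)⁻¹)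
          * s t j) :
    ∀ (t : ℕ) (i : Fin N), ∀ j ∈ insert i (G.neighborFinset i),
      0 < (Finset.univ.inf'
            (Finset.univ_nonempty_iff.mpr (Fin.pos_iff_nonempty.mp hN)) (s 0)) /
          ((insert i (G.neighborFinset i)).card *
            Finset.univ.sup'
              (Finset.univ_nonempty_iff.mpr (Fin.pos_iff_nonempty.mp hN)) (s 0)) ∧
      (Finset.univ.inf'
          (Finset.univ_nonempty_iff.mpr (Fin.pos_iff_nonempty.mp hN)) (s 0)) /
        ((insert i (G.neighborFinset i)).card *
          Finset.univ.sup'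
            (Finset.univ_nonempty_iff.mpr (Fin.pos_iff_nonempty.mp hN)) (s 0)) ≤
        (s t j)⁻¹ / ∑ k ∈ insert i (G.neighborFinset i), (s t k)⁻¹ := by
  classical
  have hne : (Finset.univ : Finset (Fin N)).Nonempty :=
    Finset.univ_nonempty_iff.mpr (Fin.pos_iff_nonempty.mp hN)
  set m := Finset.univ.inf' hne (s 0) with hm
  set M := Finset.univ.sup' hne (s 0) with hM
  have hmpos : 0 < m := by
    rw [hm, Finset.lt_inf'_iff]
    exact fun i _ => hs0 i
  have hmM : m ≤ M := by
    obtain ⟨i, _⟩ := hne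
    exact le_trans (Finset.inf'_le _ (Finset.mem_univ i))
      (Finset.le_sup' _ (Finset.mem_univ i))
  have hMpos : 0 < M := lt_of_lt_of_le hmpos hmM
  -- main invariant
  have key : ∀ t i, m ≤ s t i ∧ s t i ≤ M := by
    intro t
    induction t with
    | zero => intro i; exact ⟨Finset.inf'_le _ (Finset.mem_univ i),
        Finset.le_sup' _ (Finset.mem_univ i)⟩
    | succ t ih =>
      intro i
      set Ni := insert i (G.neighborFinset i) with hNi
      have hiNi : i ∈ Ni := Finset.mem_insert_self _ _
      have hpos : ∀ j ∈ Ni, 0 < s t j := fun j _ => lt_of_lt_of_le hmpos (ih j).1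
      have hSpos : 0 < ∑ k ∈ Ni, ((s t k) ^ 2)⁻¹ :=
        Finset.sum_pos (fun k hk => inv_pos.mpr (pow_pos (hpos k hk) 2)) ⟨i, hiNi⟩
      have hw : ∀ j ∈ Ni, 0 ≤ ((s t j) ^ 2)⁻¹ / ∑ k ∈ Ni, ((s t k) ^ 2)⁻¹ :=
        fun j hj => div_nonneg (inv_nonneg.mpr (sq_nonneg _)) hSpos.le
      have hw1 : ∑ j ∈ Ni, ((s t j) ^ 2)⁻¹ / ∑ k ∈ Ni, ((s t k) ^ 2)⁻¹ = 1 := by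
        rw [← Finset.sum_div, div_self hSpos.ne']
      constructor
      · calc m = ∑ j ∈ Ni, (((s t j) ^ 2)⁻¹ / ∑ k ∈ Ni, ((s t k) ^ 2)⁻¹) * m := by
              rw [← Finset.sum_mul, hw1, one_mul]
          _ ≤ ∑ j ∈ Ni, (((s t j) ^ 2)⁻¹ / ∑ k ∈ Ni, ((s t k) ^ 2)⁻¹) * s t j :=
              Finset.sum_le_sum (fun j hj =>
                mul_le_mul_of_nonneg_left (ih j).1 (hw j hj))
          _ = s (t + 1) i := (hrec t i).symm
      · calc s (t + 1) i
            = ∑ j ∈ Ni, (((s t j) ^ 2)⁻¹ / ∑ k ∈ Ni, ((s t k) ^ 2)⁻¹) * s t j :=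
              hrec t i
          _ ≤ ∑ j ∈ Ni, (((s t j) ^ 2)⁻¹ / ∑ k ∈ Ni, ((s t k) ^ 2)⁻¹) * M :=
              Finset.sum_le_sum (fun j hj =>
                mul_le_mul_of_nonneg_left (ih j).2 (hw j hj))
          _ = M := by rw [← Finset.sum_mul, hw1, one_mul]
  intro t i j hj
  set Ni := insert i (G.neighborFinset i) with hNi
  have hiNi : i ∈ Ni := Finset.mem_insert_self _ _
  have hcard : 0 < (Ni.card : ℝ) := by
    exact_mod_cast Finset.card_pos.mpr ⟨i, hiNi⟩
  refine ⟨div_pos hmpos (mul_pos hcard hMpos), ?_⟩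
  have hSpos : 0 < ∑ k ∈ Ni, (s t k)⁻¹ :=
    Finset.sum_pos (fun k hk => inv_pos.mpr (lt_of_lt_of_le hmpos (key t k).1)) ⟨i, hiNi⟩
  have hSle : ∑ k ∈ Ni, (s t k)⁻¹ ≤ (Ni.card : ℝ) * m⁻¹ := by
    calc ∑ k ∈ Ni, (s t k)⁻¹ ≤ ∑ k ∈ Ni, m⁻¹ :=
          Finset.sum_le_sum (fun k hk =>
            inv_anti₀ hmpos (key t k).1)
      _ = (Ni.card : ℝ) * m⁻¹ := by rw [Finset.sum_const, nsmul_eq_mul]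
  have hjinv : M⁻¹ ≤ (s t j)⁻¹ :=
    inv_anti₀ (lt_of_lt_of_le hmpos (key t j).1) (key t j).2
  calc m / ((Ni.card : ℝ) * M) = M⁻¹ / ((Ni.card : ℝ) * m⁻¹) := by
        rw [div_eq_div_iff (mul_pos hcard hMpos).ne' (mul_pos hcard (inv_pos.mpr hmpos)).ne']
        field_simp
    _ ≤ (s t j)⁻¹ / ∑ k ∈ Ni, (s t k)⁻¹ :=
        div_le_div₀ (inv_nonneg.mpr (lt_of_lt_of_le hmpos (key t j).1).le) hjinv hSpos hSle
end

section
/- Let G be a finite connected graph on vertex set {1,…,N}, and 𝒩ᵢ the set of neighbors of i in G together with i itself. Let x(0) ∈ ℝᴺ and s(0) ∈ (ℝ>0)ᴺ, and define recursively xᵢ(t+1) = Σ_{j ∈ 𝒩ᵢ} Pᵢⱼ(t)·xⱼ(t) and sᵢ(t+1) = Σ_{j ∈ 𝒩ᵢ} Mᵢⱼ(t)·sⱼ(t), where Pᵢⱼ(t) = (1/sⱼ(t))/( Σ_{k ∈ 𝒩ᵢ} 1/sₖ(t) ) and Mᵢⱼ(t) = (1/sⱼ(t)²)/( Σ_{k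 ∈ 𝒩ᵢ} 1/sₖ(t)² ) for j ∈ 𝒩ᵢ, and both are 0 otherwise. Then the system converges to consensus: there exist scalars x*, s* ∈ ℝ such that for every j ∈ {1,…,N}, xⱼ(t) → x* and sⱼ(t) → s* as t → ∞. -/
open Finset Filter

private lemma convex_comb_bounds {α : Type*} (S : Finset α) (w f : α → ℝ)
    (hw : ∀ j ∈ S, 0 ≤ w j) (h1 : ∑ j ∈ S, w j = 1) (lo hi : ℝ)
    (hf : ∀ j ∈ S, lo ≤ f j ∧ f j ≤ hi) :
    lo ≤ ∑ j ∈ S, w j * f j ∧ ∑ j ∈ S, w j * f j ≤ hi := by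
  constructor
  · calc lo = ∑ j ∈ S, w j * lo := by rw [← sum_mul, h1, one_mul]
    _ ≤ ∑ j ∈ S, w j * f j :=
      sum_le_sum fun j hj => mul_le_mul_of_nonneg_left (hf j hj).1 (hw j hj)
  · calc ∑ j ∈ S, w j * f j ≤ ∑ j ∈ S, w j * hi :=
      sum_le_sum fun j hj => mul_le_mul_of_nonneg_left (hf j hj).2 (hw j hj)
    _ = hi := by rw [← sum_mul, h1, one_mul]

private lemma consensus_abstract (N : ℕ) (hN : 0 < N) (G : SimpleGraph (Fin N))
    [DecidableRel G.Adj]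
    (hconn : G.Connected) (η : ℝ) (hη : 0 < η)
    (y : ℕ → Fin N → ℝ) (w : ℕ → Fin N → Fin N → ℝ)
    (hw1 : ∀ t i, ∑ j ∈ insert i (G.neighborFinset i), w t i j = 1)
    (hwlb : ∀ t i j, j ∈ insert i (G.neighborFinset i) → η ≤ w t i j)
    (hrec : ∀ t i, y (t + 1) i = ∑ j ∈ insert i (G.neighborFinset i), w t i j * y t j) :
    ∃ c : ℝ, ∀ j : Fin N, Tendsto (fun t => y t j) atTop (nhds c) := by
  haveI : Nonempty (Fin N) := ⟨⟨0, hN⟩⟩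
  set Nb : Fin N → Finset (Fin N) := fun i => insert i (G.neighborFinset i) with hNb
  have hself : ∀ i, i ∈ Nb i := fun i => mem_insert_self _ _
  have hune : (univ : Finset (Fin N)).Nonempty := univ_nonempty
  set m : ℕ → ℝ := fun t => univ.inf' hune (y t) with hm
  set M : ℕ → ℝ := fun t => univ.sup' hune (y t) with hM
  have hmle : ∀ t j, m t ≤ y t j := fun t j => inf'_le _ (mem_univ j)
  have hleM : ∀ t j, y t j ≤ M t := fun t j => le_sup' _ (mem_univ j)
  have hmM : ∀ t, m t ≤ M t := fun t => le_trans (hmle t (Classical.arbitrary _)) (hleM t _)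
  have hη1 : η ≤ 1 := by
    set i0 : Fin N := Classical.arbitrary _
    have h1 := hw1 0 i0
    have h2 := single_le_sum (f := fun j => w 0 i0 j)
      (fun j hj => le_trans hη.le (hwlb 0 i0 j hj)) (hself i0)
    calc η ≤ w 0 i0 i0 := hwlb 0 i0 i0 (hself i0)
    _ ≤ ∑ j ∈ Nb i0, w 0 i0 j := h2
    _ = 1 := h1
  -- single step lower bound
  have hstep : ∀ t i j0, j0 ∈ Nb i → ∀ c : ℝ, (∀ k, c ≤ y t k) →
      c + η * (y t j0 - c) ≤ y (t + 1) i := by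
    intro t i j0 hj0 c hc
    rw [hrec t i]
    rw [← add_sum_erase (Nb i) (fun j => w t i j * y t j) hj0]
    have h2 : ∑ j ∈ (Nb i).erase j0, w t i j * c ≤ ∑ j ∈ (Nb i).erase j0, w t i j * y t j := by
      refine sum_le_sum fun j hj => ?_
      have hw0 : (0:ℝ) ≤ w t i j := le_trans hη.le (hwlb t i j (mem_of_mem_erase hj))
      exact mul_le_mul_of_nonneg_left (hc j) hw0
    have hwsum : ∑ j ∈ (Nb i).erase j0, w t i j = 1 - w t i j0 := by
      have h := hw1 t i
      rw [← add_sum_erase (Nb i) (fun j => w t i j) hj0] at h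
      linarith
    have h3 : ∑ j ∈ (Nb i).erase j0, w t i j * c = (1 - w t i j0) * c := by
      rw [← sum_mul, hwsum]
    have hwj0 : η ≤ w t i j0 := hwlb t i j0 hj0
    have hyj0 : c ≤ y t j0 := hc j0
    nlinarith [h2, mul_le_mul_of_nonneg_right hwj0 (sub_nonneg.2 hyj0)]
  have hlowstep : ∀ t (c : ℝ), (∀ k, c ≤ y t k) → ∀ k, c ≤ y (t + 1) k := by
    intro t c hc k
    have h := hstep t k k (hself k) c hc
    nlinarith [hc k]
  have hlow : ∀ t0 d k, m t0 ≤ y (t0 + d) k := by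
    intro t0 d
    induction d with
    | zero => exact hmle t0
    | succ n ih => exact hlowstep (t0 + n) (m t0) ih
  have hupstep : ∀ t (c : ℝ), (∀ k, y t k ≤ c) → ∀ k, y (t + 1) k ≤ c := by
    intro t c hc k
    rw [hrec t k]
    calc ∑ j ∈ Nb k, w t k j * y t j ≤ ∑ j ∈ Nb k, w t k j * c :=
      sum_le_sum fun j hj =>
        mul_le_mul_of_nonneg_left (hc j) (le_trans hη.le (hwlb t k j hj))
    _ = (∑ j ∈ Nb k, w t k j) * c := by rw [sum_mul]
    _ = c := by rw [hw1 t k, one_mul]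
  have hup : ∀ t0 d k, y (t0 + d) k ≤ M t0 := by
    intro t0 d
    induction d with
    | zero => exact hleM t0
    | succ n ih => exact hupstep (t0 + n) (M t0) ih
  -- contraction over N steps
  have hcontr : ∀ t0, M (t0 + N) - m (t0 + N) ≤ (1 - η ^ N) * (M t0 - m t0) := by
    intro t0
    obtain ⟨istar, -, histar⟩ := exists_mem_eq_sup' hune (y t0)
    have claimA : ∀ (jv iv : Fin N) (p : G.Walk jv iv), M t0 ≤ y t0 iv →
        m t0 + η ^ p.length * (M t0 - m t0) ≤ y (t0 + p.length) jv := by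
      intro jv iv p
      induction p with
      | nil =>
        intro hiv
        simpa using hiv
      | cons hadj q ih =>
        intro hiv
        rename_i u v wv
        have ih2 := ih hiv
        have hvmem : v ∈ Nb u := by
          simp only [hNb, mem_insert, SimpleGraph.mem_neighborFinset]
          exact Or.inr hadj
        have h1 := hstep (t0 + q.length) u v hvmem (m t0) (hlow t0 q.length)
        have h2 : η * (η ^ q.length * (M t0 - m t0)) ≤ η * (y (t0 + q.length) v - m t0) := by
          nlinarith
        have hlen : (SimpleGraph.Walk.cons hadj q).length = q.length + 1 :=
          SimpleGraph.Walk.length_cons _ _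
        rw [hlen]
        have : t0 + (q.length + 1) = (t0 + q.length) + 1 := by omega
        rw [this, pow_succ]
        nlinarith
    have claimB : ∀ (r : ℕ) (d : ℕ) (jv : Fin N) (a : ℝ), 0 ≤ a →
        m t0 + a * (M t0 - m t0) ≤ y (t0 + d) jv →
        m t0 + η ^ r * a * (M t0 - m t0) ≤ y (t0 + d + r) jv := by
      intro r
      induction r with
      | zero => intro d jv a _ h; simpa using h
      | succ n ih =>
        intro d jv a ha h
        have h1 := ih d jv a ha h
        have h2 := hstep (t0 + d + n) jv jv (hself jv) (m t0)
          (fun k => by have := hlow t0 (d + n) k; rwa [← add_assoc] at this)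
        have hMm : 0 ≤ M t0 - m t0 := sub_nonneg.2 (hmM t0)
        have : t0 + d + (n + 1) = (t0 + d + n) + 1 := by omega
        rw [this, pow_succ]
        have hpow : (0:ℝ) ≤ η ^ n := pow_nonneg hη.le n
        nlinarith
    have hall : ∀ jv : Fin N, m t0 + η ^ N * (M t0 - m t0) ≤ y (t0 + N) jv := by
      intro jv
      obtain ⟨p, hp, -⟩ := (hconn.preconnected jv istar).exists_path_of_dist
      have hL : p.length < N := by
        have := hp.length_lt
        simpa using this
      have hA := claimA jv istar p histar.le
      have hB := claimB (N - p.length) p.length jv (η ^ p.length)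
        (pow_nonneg hη.le _) hA
      have he : t0 + p.length + (N - p.length) = t0 + N := by omega
      have hpow : η ^ (N - p.length) * η ^ p.length = η ^ N := by
        rw [← pow_add]
        congr 1
        omega
      rw [he, hpow] at hB
      exact hB
    have h1 : m t0 + η ^ N * (M t0 - m t0) ≤ m (t0 + N) := le_inf' _ _ fun j _ => hall j
    have h2 : M (t0 + N) ≤ M t0 := sup'_le _ _ fun j _ => hup t0 N j
    nlinarith
  -- limits
  have hmmono : Monotone m := monotone_nat_of_le_succ fun t =>
    le_inf' _ _ fun j _ => hlowstep t (m t) (hmle t) j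
  have hManti : Antitone M := antitone_nat_of_succ_le fun t =>
    sup'_le _ _ fun j _ => hupstep t (M t) (hleM t) j
  set r : ℝ := 1 - η ^ N with hr
  have hηN : 0 < η ^ N := pow_pos hη N
  have hr0 : 0 ≤ r := by
    have : η ^ N ≤ 1 := pow_le_one₀ hη.le hη1
    simp [hr]; linarith
  have hr1 : r < 1 := by simp [hr]; linarith
  set gap : ℕ → ℝ := fun t => M t - m t with hgap
  have hgap0 : ∀ t, 0 ≤ gap t := fun t => sub_nonneg.2 (hmM t)
  have hgapanti : Antitone gap := fun a b hab => by
    simp only [hgap]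
    have := hmmono hab
    have := hManti hab
    linarith
  have hgapn : ∀ n : ℕ, gap (n * N) ≤ r ^ n * gap 0 := by
    intro n
    induction n with
    | zero => simp
    | succ k ih =>
      have h1 := hcontr (k * N)
      have h2 : (k + 1) * N = k * N + N := by ring
      rw [h2]
      calc gap (k * N + N) ≤ r * gap (k * N) := h1
      _ ≤ r * (r ^ k * gap 0) := mul_le_mul_of_nonneg_left ih hr0
      _ = r ^ (k + 1) * gap 0 := by ring
  have hsub0 : Tendsto (fun n => gap (n * N)) atTop (nhds 0) := by
    refine squeeze_zero (fun n => hgap0 _) hgapn ?_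
    have := (tendsto_pow_atTop_nhds_zero_of_lt_one hr0 hr1).mul_const (gap 0)
    simpa using this
  have hgaplim : Tendsto gap atTop (nhds 0) := by
    have hbdd : BddBelow (Set.range gap) := ⟨0, by rintro _ ⟨t, rfl⟩; exact hgap0 t⟩
    have hlim := tendsto_atTop_ciInf hgapanti hbdd
    have hNat : Tendsto (fun n : ℕ => n * N) atTop atTop :=
      tendsto_atTop_mono (fun n => Nat.le_mul_of_pos_right n hN) tendsto_id
    have hsub := hlim.comp hNat
    have := tendsto_nhds_unique hsub0 hsub
    rwa [← this] at hlim
  have hmbdd : BddAbove (Set.range m) := ⟨M 0, by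
    rintro _ ⟨t, rfl⟩
    calc m t ≤ M t := hmM t
    _ ≤ M 0 := hManti (Nat.zero_le t)⟩
  have hmlim : Tendsto m atTop (nhds (⨆ t, m t)) := tendsto_atTop_ciSup hmmono hmbdd
  set c : ℝ := ⨆ t, m t with hc
  have hMlim : Tendsto M atTop (nhds c) := by
    have := hmlim.add hgaplim
    simp only [add_zero] at this
    convert this using 1
    funext t
    simp [hgap]
  refine ⟨c, fun j => ?_⟩
  exact tendsto_of_tendsto_of_tendsto_of_le_of_le hmlim hMlim
    (fun t => hmle t j) (fun t => hleM t j)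

/-- Convergence of the proposed fusion algorithm: on a connected graph, the coupled
inverse-variance-weighted consensus iterations on the estimates `x(t)` and the
presumed variances `s(t)` converge to a consensus. -/
theorem fusion_algorithm_converges
    (N : ℕ) (hN : 0 < N) (G : SimpleGraph (Fin N)) [DecidableRel G.Adj]
    (hconn : G.Connected)
    (x s : ℕ → Fin N → ℝ) (hs0 : ∀ i, 0 < s 0 i)
    (hxrec : ∀ t i, x (t + 1) i =
      ∑ j ∈ insert i (G.neighborFinset i),
        ((s t j)⁻¹ / ∑ k ∈ insert i (G.neighborFinset i), (s t k)⁻¹) * x t j)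
    (hsrec : ∀ t i, s (t + 1) i =
      ∑ j ∈ insert i (G.neighborFinset i),
        (((s t j) ^ 2)⁻¹ / ∑ k ∈ insert i (G.neighborFinset i), ((s t k) ^ 2)⁻¹)
          * s t j) :
    ∃ xstar sstar : ℝ, ∀ j : Fin N,
      Tendsto (fun t => x t j) atTop (nhds xstar) ∧
      Tendsto (fun t => s t j) atTop (nhds sstar) := by
  haveI : Nonempty (Fin N) := ⟨⟨0, hN⟩⟩
  have hune : (univ : Finset (Fin N)).Nonempty := univ_nonempty
  set Nb : Fin N → Finset (Fin N) := fun i => insert i (G.neighborFinset i) with hNb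
  have hself : ∀ i, i ∈ Nb i := fun i => mem_insert_self _ _
  have hNbne : ∀ i, (Nb i).Nonempty := fun i => ⟨i, hself i⟩
  have hcard : ∀ i, ((Nb i).card : ℝ) ≤ (N : ℝ) := by
    intro i
    have h1 : (Nb i).card ≤ N := by
      have := card_le_univ (Nb i)
      simpa using this
    exact_mod_cast h1
  set m0 : ℝ := univ.inf' hune (s 0) with hm0
  set M0 : ℝ := univ.sup' hune (s 0) with hM0
  have hm0pos : 0 < m0 := by
    obtain ⟨i, -, hi⟩ := exists_mem_eq_inf' hune (s 0)
    rw [hm0, hi]; exact hs0 i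
  have hm0M0 : m0 ≤ M0 :=
    le_trans (inf'_le _ (mem_univ (Classical.arbitrary _)))
      (le_sup' _ (mem_univ (Classical.arbitrary _)))
  have hM0pos : 0 < M0 := lt_of_lt_of_le hm0pos hm0M0
  -- bounds on s
  have hbound : ∀ t i, m0 ≤ s t i ∧ s t i ≤ M0 := by
    intro t
    induction t with
    | zero => exact fun i => ⟨inf'_le _ (mem_univ i), le_sup' _ (mem_univ i)⟩
    | succ n ih =>
      intro i
      rw [hsrec n i]
      set D : ℝ := ∑ k ∈ Nb i, ((s n k) ^ 2)⁻¹ with hD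
      have hDpos : 0 < D :=
        sum_pos (fun k _ => inv_pos.2 (pow_pos (lt_of_lt_of_le hm0pos (ih k).1) 2)) (hNbne i)
      refine convex_comb_bounds (Nb i) _ _ ?_ ?_ m0 M0 (fun j _ => ih j)
      · intro j _
        have hsj : 0 < s n j := lt_of_lt_of_le hm0pos (ih j).1
        exact (div_pos (inv_pos.2 (pow_pos hsj 2)) hDpos).le
      · rw [← sum_div, ← hD, div_self hDpos.ne']
  have hspos : ∀ t i, 0 < s t i := fun t i => lt_of_lt_of_le hm0pos (hbound t i).1
  -- s convergence
  obtain ⟨sstar, hsstar⟩ := consensus_abstract N hN G hconn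
    ((M0 ^ 2)⁻¹ / ((N : ℝ) * (m0 ^ 2)⁻¹))
    (div_pos (inv_pos.2 (pow_pos hM0pos 2))
      (mul_pos (by exact_mod_cast hN) (inv_pos.2 (pow_pos hm0pos 2))))
    s (fun t i j => ((s t j) ^ 2)⁻¹ / ∑ k ∈ Nb i, ((s t k) ^ 2)⁻¹)
    (by
      intro t i
      have hDpos : 0 < ∑ k ∈ Nb i, ((s t k) ^ 2)⁻¹ :=
        sum_pos (fun k _ => inv_pos.2 (pow_pos (hspos t k) 2)) (hNbne i)
      rw [← sum_div, div_self hDpos.ne'])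
    (by
      intro t i j hj
      have hDpos : 0 < ∑ k ∈ Nb i, ((s t k) ^ 2)⁻¹ :=
        sum_pos (fun k _ => inv_pos.2 (pow_pos (hspos t k) 2)) (hNbne i)
      have hnum : (M0 ^ 2)⁻¹ ≤ ((s t j) ^ 2)⁻¹ := by
        have h1 : (s t j) ^ 2 ≤ M0 ^ 2 := by nlinarith [(hbound t j).1, (hbound t j).2, hm0pos]
        have h2 : 0 < (s t j) ^ 2 := pow_pos (hspos t j) 2
        exact inv_anti₀ h2 h1
      have hden : ∑ k ∈ Nb i, ((s t k) ^ 2)⁻¹ ≤ (N : ℝ) * (m0 ^ 2)⁻¹ := by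
        calc ∑ k ∈ Nb i, ((s t k) ^ 2)⁻¹ ≤ ∑ k ∈ Nb i, (m0 ^ 2)⁻¹ := by
              refine sum_le_sum fun k _ => ?_
              have h1 : m0 ^ 2 ≤ (s t k) ^ 2 := by
                nlinarith [(hbound t k).1, hm0pos]
              exact inv_anti₀ (by positivity) h1
        _ = ((Nb i).card : ℝ) * (m0 ^ 2)⁻¹ := by rw [sum_const, nsmul_eq_mul]
        _ ≤ (N : ℝ) * (m0 ^ 2)⁻¹ := by
              have := hcard i
              have h2 : (0:ℝ) ≤ (m0 ^ 2)⁻¹ := by positivity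
              nlinarith
      exact div_le_div₀ (inv_nonneg.2 (sq_nonneg _)) hnum hDpos hden)
    hsrec
  -- x convergence
  obtain ⟨xstar, hxstar⟩ := consensus_abstract N hN G hconn
    (M0⁻¹ / ((N : ℝ) * m0⁻¹))
    (div_pos (inv_pos.2 hM0pos)
      (mul_pos (by exact_mod_cast hN) (inv_pos.2 hm0pos)))
    x (fun t i j => (s t j)⁻¹ / ∑ k ∈ Nb i, (s t k)⁻¹)
    (by
      intro t i
      have hDpos : 0 < ∑ k ∈ Nb i, (s t k)⁻¹ :=
        sum_pos (fun k _ => inv_pos.2 (hspos t k)) (hNbne i)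
      rw [← sum_div, div_self hDpos.ne'])
    (by
      intro t i j hj
      have hDpos : 0 < ∑ k ∈ Nb i, (s t k)⁻¹ :=
        sum_pos (fun k _ => inv_pos.2 (hspos t k)) (hNbne i)
      have hnum : M0⁻¹ ≤ (s t j)⁻¹ := inv_anti₀ (hspos t j) (hbound t j).2
      have hden : ∑ k ∈ Nb i, (s t k)⁻¹ ≤ (N : ℝ) * m0⁻¹ := by
        calc ∑ k ∈ Nb i, (s t k)⁻¹ ≤ ∑ k ∈ Nb i, m0⁻¹ :=
              sum_le_sum fun k _ => inv_anti₀ hm0pos (hbound t k).1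
        _ = ((Nb i).card : ℝ) * m0⁻¹ := by rw [sum_const, nsmul_eq_mul]
        _ ≤ (N : ℝ) * m0⁻¹ := by
              have := hcard i
              have h2 : (0:ℝ) ≤ m0⁻¹ := by positivity
              nlinarith
      exact div_le_div₀ (inv_nonneg.2 (hspos t j).le) hnum hDpos hden)
    hxrec
  exact ⟨xstar, sstar, fun j => ⟨hxstar j, hsstar j⟩⟩
end

section
/- Let N ≥ 1 and let P ∈ ℝ^{N×N} be a doubly stochastic matrix with all entries strictly positive. Let σ1, …, σN > 0 and x1, …, xN ∈ ℝ, and define a(0), b(0) ∈ ℝᴺ by aₖ(0) = xₖ/σₖ² and bₖ(0) = 1/σₖ², with a(t+1) = P·a(t) and b(t+1) = P·b(t). Then for every j ∈ {1,…,N}, the limit lim_{t→∞} aⱼ(t)/bⱼ(t) exists and equals x̂ = ( Σₗ xₗ/σₗ² ) / ( Σₗ 1/σₗ² ). -/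
open Finset Filter Matrix


lemma consensus_tendsto (N : ℕ) (hN : 1 ≤ N) (P : Matrix (Fin N) (Fin N) ℝ)
    (hpos : ∀ i j, 0 < P i j)
    (hrow : ∀ i, ∑ j, P i j = 1) (hcol : ∀ j, ∑ i, P i j = 1)
    (v : ℕ → Fin N → ℝ) (hv : ∀ t, v (t + 1) = P.mulVec (v t)) (j : Fin N) :
    Tendsto (fun t => v t j) atTop (nhds ((∑ i, v 0 i) / N)) := by
  haveI : NeZero N := ⟨Nat.one_le_iff_ne_zero.mp hN⟩
  haveI : Nonempty (Fin N) := Fin.pos_iff_nonempty.mp hN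
  have hune : (Finset.univ : Finset (Fin N)).Nonempty := univ_nonempty
  -- minimum entry
  obtain ⟨p, -, hp⟩ := Finset.exists_mem_eq_inf' (univ_nonempty (α := Fin N × Fin N))
      (fun p : Fin N × Fin N => P p.1 p.2)
  set ε : ℝ := Finset.univ.inf' univ_nonempty (fun p : Fin N × Fin N => P p.1 p.2) with hε
  have hεpos : 0 < ε := by
    rw [hp]; exact hpos p.1 p.2
  have hεle : ∀ i j, ε ≤ P i j := fun i j =>
    Finset.inf'_le _ (Finset.mem_univ (i, j))
  have hεle1 : ε ≤ 1 := by
    refine le_trans (hεle p.1 p.2) ?_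
    rw [← hrow p.1]
    exact Finset.single_le_sum (fun k _ => (hpos p.1 k).le) (Finset.mem_univ p.2)
  set M : ℕ → ℝ := fun t => Finset.univ.sup' hune (v t) with hM
  set m : ℕ → ℝ := fun t => Finset.univ.inf' hune (v t) with hm
  have hmM : ∀ t, m t ≤ M t := fun t =>
    le_trans (Finset.inf'_le _ (Finset.mem_univ j)) (Finset.le_sup' _ (Finset.mem_univ j))
  have hgap : ∀ t, M (t + 1) - m (t + 1) ≤ (1 - ε) * (M t - m t) := by
    intro t
    obtain ⟨j0, -, hj0⟩ := Finset.exists_mem_eq_inf' hune (v t)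
    have hup : ∀ i, v (t + 1) i ≤ M t - ε * (M t - m t) := by
      intro i
      rw [hv t]
      have h1 : P.mulVec (v t) i = P i j0 * v t j0 + ∑ k ∈ univ.erase j0, P i k * v t k := by
        rw [Matrix.mulVec, dotProduct, ← Finset.add_sum_erase _ _ (Finset.mem_univ j0)]
      have h2 : ∑ k ∈ univ.erase j0, P i k * v t k ≤ ∑ k ∈ univ.erase j0, P i k * M t := by
        refine Finset.sum_le_sum fun k _ => ?_
        exact mul_le_mul_of_nonneg_left (Finset.le_sup' _ (Finset.mem_univ k)) (hpos i k).le
      have h3 : ∑ k ∈ univ.erase j0, P i k = 1 - P i j0 := by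
        have := Finset.add_sum_erase _ (P i) (Finset.mem_univ j0)
        rw [hrow i] at this; linarith
      have h4 : P i j0 * v t j0 = P i j0 * m t := by rw [← hj0]
      have h5 : P.mulVec (v t) i ≤ M t - P i j0 * (M t - m t) := by
        rw [h1]
        calc P i j0 * v t j0 + ∑ k ∈ univ.erase j0, P i k * v t k
            ≤ P i j0 * m t + (1 - P i j0) * M t := by
              have h6 : ∑ k ∈ univ.erase j0, P i k * M t = (1 - P i j0) * M t := by
                rw [← Finset.sum_mul, h3]
              linarith
          _ = M t - P i j0 * (M t - m t) := by ring
      refine h5.trans ?_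
      have := mul_le_mul_of_nonneg_right (hεle i j0) (sub_nonneg.mpr (hmM t))
      linarith
    have hlo : ∀ i, m t ≤ v (t + 1) i := by
      intro i
      rw [hv t]
      have : ∑ k, P i k * m t ≤ P.mulVec (v t) i := by
        rw [Matrix.mulVec, dotProduct]
        exact Finset.sum_le_sum fun k _ => mul_le_mul_of_nonneg_left
          (Finset.inf'_le _ (Finset.mem_univ k)) (hpos i k).le
      rw [← Finset.sum_mul, hrow i, one_mul] at this
      exact this
    have hM1 : M (t + 1) ≤ M t - ε * (M t - m t) :=
      Finset.sup'_le _ _ fun i _ => hup i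
    have hm1 : m t ≤ m (t + 1) :=
      Finset.le_inf' _ _ fun i _ => hlo i
    linarith
  have hgapn : ∀ t, M t - m t ≤ (1 - ε) ^ t * (M 0 - m 0) := by
    intro t
    induction t with
    | zero => simp
    | succ n ih =>
      calc M (n + 1) - m (n + 1) ≤ (1 - ε) * (M n - m n) := hgap n
        _ ≤ (1 - ε) * ((1 - ε) ^ n * (M 0 - m 0)) :=
            mul_le_mul_of_nonneg_left ih (by linarith)
        _ = (1 - ε) ^ (n + 1) * (M 0 - m 0) := by ring
  -- sum invariant
  have hsum : ∀ t, ∑ i, v t i = ∑ i, v 0 i := by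
    intro t
    induction t with
    | zero => rfl
    | succ n ih =>
      rw [hv n, ← ih]
      simp only [Matrix.mulVec, dotProduct]
      rw [Finset.sum_comm]
      simp only [← Finset.sum_mul]
      simp [hcol]
  set S : ℝ := ∑ i, v 0 i with hS
  have hNpos : (0:ℝ) < N := by exact_mod_cast hN
  have havg : ∀ t, m t ≤ S / N ∧ S / N ≤ M t := by
    intro t
    constructor
    · rw [le_div_iff₀ hNpos, ← hsum t]
      calc m t * N = ∑ _i : Fin N, m t := by simp [mul_comm]
        _ ≤ ∑ i, v t i := Finset.sum_le_sum fun i _ => Finset.inf'_le _ (Finset.mem_univ i)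
    · rw [div_le_iff₀ hNpos, ← hsum t]
      calc ∑ i, v t i ≤ ∑ _i : Fin N, M t :=
            Finset.sum_le_sum fun i _ => Finset.le_sup' _ (Finset.mem_univ i)
        _ = M t * N := by simp [mul_comm]
  have hbound : ∀ t, |v t j - S / N| ≤ (1 - ε) ^ t * (M 0 - m 0) := by
    intro t
    have h1 : v t j ≤ M t := Finset.le_sup' _ (Finset.mem_univ j)
    have h2 : m t ≤ v t j := Finset.inf'_le _ (Finset.mem_univ j)
    have ⟨h3, h4⟩ := havg t
    rw [abs_le]
    have := hgapn t
    constructor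
    · linarith
    · linarith
  have hzero : Tendsto (fun t => v t j - S / N) atTop (nhds 0) := by
    apply squeeze_zero_norm hbound
    rw [show (0:ℝ) = 0 * (M 0 - m 0) by ring]
    exact (tendsto_pow_atTop_nhds_zero_of_lt_one (by linarith) (by linarith)).mul_const _
  have := hzero.add_const (S / N)
  simpa using this

/-- Two parallel average-consensus iterations with a strictly positive doubly
stochastic matrix compute the inverse-variance weighted optimal estimator:
each node's ratio `aⱼ(t)/bⱼ(t)` converges to
`x̂ = (Σ xₗ/σₗ²)/(Σ 1/σₗ²)`. -/
theorem ratio_consensus_computes_optimal_estimator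
    (N : ℕ) (hN : 1 ≤ N) (P : Matrix (Fin N) (Fin N) ℝ)
    (hpos : ∀ i j, 0 < P i j)
    (hrow : ∀ i, ∑ j, P i j = 1) (hcol : ∀ j, ∑ i, P i j = 1)
    (x σ : Fin N → ℝ) (hσ : ∀ i, 0 < σ i)
    (a b : ℕ → Fin N → ℝ)
    (ha0 : ∀ k, a 0 k = x k / (σ k) ^ 2) (hb0 : ∀ k, b 0 k = ((σ k) ^ 2)⁻¹)
    (ha : ∀ t, a (t + 1) = P.mulVec (a t)) (hb : ∀ t, b (t + 1) = P.mulVec (b t)) :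
    ∀ j : Fin N,
      Tendsto (fun t => a t j / b t j) atTop
        (nhds ((∑ i, x i / (σ i) ^ 2) / ∑ i, ((σ i) ^ 2)⁻¹)) := by
  intro j
  haveI : Nonempty (Fin N) := Fin.pos_iff_nonempty.mp hN
  have hNpos : (0:ℝ) < N := by exact_mod_cast hN
  have hSA : ∑ i, a 0 i = ∑ i, x i / (σ i) ^ 2 := Finset.sum_congr rfl fun i _ => ha0 i
  have hSB : ∑ i, b 0 i = ∑ i, ((σ i) ^ 2)⁻¹ := Finset.sum_congr rfl fun i _ => hb0 i
  have hBpos : 0 < ∑ i, ((σ i) ^ 2)⁻¹ :=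
    Finset.sum_pos (fun i _ => inv_pos.mpr (pow_pos (hσ i) 2)) univ_nonempty
  have hta := consensus_tendsto N hN P hpos hrow hcol a ha j
  have htb := consensus_tendsto N hN P hpos hrow hcol b hb j
  rw [hSA] at hta
  rw [hSB] at htb
  have hBN : ((∑ i, ((σ i) ^ 2)⁻¹) / N) ≠ 0 := by positivity
  have := hta.div htb hBN
  have heq : ((∑ i, x i / (σ i) ^ 2) / N) / ((∑ i, ((σ i) ^ 2)⁻¹) / N)
      = (∑ i, x i / (σ i) ^ 2) / ∑ i, ((σ i) ^ 2)⁻¹ := by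
    field_simp
  rwa [heq] at this
end
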